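/- For every entire function p : ℂ → ℂ and every natural number n ≥ 0, the function g = Q̄ⁿ(p(z)·exp(−b|z|²/4)) (the n-fold application of the creation operator Q̄) satisfies L g(x) = (2n+1)·b·g(x) for every x ∈ ℝ²; thus every Landau level Λ_{n+1} = (2n+1)·b admits smooth eigenfunctions of the Landau Hamiltonian. -/

import Mathlib

open MeasureTheory Complex

/-- Directional (real) partial derivative of `f : ℂ → ℂ` in the direction `v`. -/
noncomputable def pd (f : ℂ → ℂ) (v : ℂ) (z : ℂ) : ℂ := fderiv ℝ f z v

/-- Wirtinger derivative `∂_z f = ½(∂₁ f − i ∂₂ f)`. -/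
noncomputable def wdz (f : ℂ → ℂ) (z : ℂ) : ℂ := (pd f 1 z - I * pd f I z) / 2

/-- Wirtinger derivative `∂_z̄ f = ½(∂₁ f + i ∂₂ f)`. -/
noncomputable def wdzbar (f : ℂ → ℂ) (z : ℂ) : ℂ := (pd f 1 z + I * pd f I z) / 2

/-- Annihilation operator `Q f = −2i (∂_z̄ f + (bz/4) f)`. -/
noncomputable def annQ (b : ℝ) (f : ℂ → ℂ) (z : ℂ) : ℂ :=
  -2 * I * (wdzbar f z + ((b : ℂ) * z / 4) * f z)

/-- Creation operator `Q̄ f = −2i (∂_z f − (b z̄/4) f)`. -/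
noncomputable def creQ (b : ℝ) (f : ℂ → ℂ) (z : ℂ) : ℂ :=
  -2 * I * (wdz f z - ((b : ℂ) * (starRingEnd ℂ z) / 4) * f z)

/-- The Landau Hamiltonian
`L f = −Δf + i b (x₁ ∂₂ f − x₂ ∂₁ f) + (b²/4)(x₁² + x₂²) f` on `ℝ² ≃ ℂ`. -/
noncomputable def landau (b : ℝ) (f : ℂ → ℂ) (z : ℂ) : ℂ :=
  -(pd (pd f 1) 1 z + pd (pd f I) I z)
    + I * (b : ℂ) * ((z.re : ℂ) * pd f I z - (z.im : ℂ) * pd f 1 z)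
    + ((b : ℂ) ^ 2 / 4) * ((z.re : ℂ) ^ 2 + (z.im : ℂ) ^ 2) * f z


open ContDiff
open Complex ContDiff

/-- directional complex derivative on `ℂ × ℂ` -/
noncomputable def Dv (v : ℂ × ℂ) (F : ℂ × ℂ → ℂ) (q : ℂ × ℂ) : ℂ := fderiv ℂ F q v

lemma le1inf : (1 : WithTop ℕ∞) ≤ ∞ := by
  have := WithTop.coe_le_coe.mpr (le_top : (1:ℕ∞) ≤ ⊤); simpa using this

lemma le2inf : (2 : WithTop ℕ∞) ≤ ∞ := by
  have := WithTop.coe_le_coe.mpr (le_top : (2:ℕ∞) ≤ ⊤); simpa using this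

lemma inf_succ_le : ∞ + 1 ≤ ∞ := by rw [ENat.coe_top_add_one]

lemma Dv_smooth {F : ℂ × ℂ → ℂ} (hF : ContDiff ℂ ∞ F) (v : ℂ × ℂ) :
    ContDiff ℂ ∞ (Dv v F) :=
  (hF.fderiv_right (m := (⊤:ℕ∞)) inf_succ_le).clm_apply contDiff_const

lemma Dv_diff {F : ℂ × ℂ → ℂ} (hF : ContDiff ℂ ∞ F) (v : ℂ × ℂ) :
    Differentiable ℂ (Dv v F) := (Dv_smooth hF v).differentiable (by simp)

lemma Dv_swap {F : ℂ × ℂ → ℂ} (hF : ContDiff ℂ ∞ F) (v w : ℂ × ℂ) (q : ℂ × ℂ) :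
    Dv v (Dv w F) q = Dv w (Dv v F) q := by
  have hd : Differentiable ℂ (fderiv ℂ F) :=
    (hF.fderiv_right (m := (⊤:ℕ∞)) inf_succ_le).differentiable (by simp)
  have h1 : ∀ u u' : ℂ × ℂ, Dv u (Dv u' F) q = fderiv ℂ (fderiv ℂ F) q u u' := by
    intro u u'
    unfold Dv
    rw [fderiv_clm_apply (hd q) (differentiableAt_const u')]
    simp
  rw [h1, h1]
  exact (hF.contDiffAt.isSymmSndFDerivAt (by rw [minSmoothness_of_isRCLikeNormedField]; exact le2inf)).eq v w

lemma Dv_const_mul {G : ℂ × ℂ → ℂ} (hG : Differentiable ℂ G) (c : ℂ) (v q : ℂ × ℂ) :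
    Dv v (fun x => c * G x) q = c * Dv v G q := by
  unfold Dv; rw [fderiv_const_mul (hG q) c]; simp

lemma Dv_mul {G H : ℂ × ℂ → ℂ} (hG : Differentiable ℂ G) (hH : Differentiable ℂ H)
    (v q : ℂ × ℂ) :
    Dv v (fun x => G x * H x) q = G q * Dv v H q + Dv v G q * H q := by
  unfold Dv; rw [fderiv_fun_mul (hG q) (hH q)]; simp; ring

lemma Dv_sub {G H : ℂ × ℂ → ℂ} (hG : Differentiable ℂ G) (hH : Differentiable ℂ H)
    (v q : ℂ × ℂ) :
    Dv v (fun x => G x - H x) q = Dv v G q - Dv v H q := by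
  unfold Dv; rw [fderiv_fun_sub (hG q) (hH q)]; simp

lemma Dv_add {G H : ℂ × ℂ → ℂ} (hG : Differentiable ℂ G) (hH : Differentiable ℂ H)
    (v q : ℂ × ℂ) :
    Dv v (fun x => G x + H x) q = Dv v G q + Dv v H q := by
  unfold Dv; rw [fderiv_fun_add (hG q) (hH q)]; simp

lemma Dv_snd (v q : ℂ × ℂ) : Dv v (fun x => x.2) q = v.2 := by
  unfold Dv
  rw [show (fun x : ℂ × ℂ => x.2) = Prod.snd from rfl, fderiv_snd]; rfl

lemma Dv_fst (v q : ℂ × ℂ) : Dv v (fun x => x.1) q = v.1 := by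
  unfold Dv
  rw [show (fun x : ℂ × ℂ => x.1) = Prod.fst from rfl, fderiv_fst]; rfl

lemma Dv_comp_fst {h : ℂ → ℂ} (hh : Differentiable ℂ h) (v q : ℂ × ℂ) :
    Dv v (fun x => h x.1) q = deriv h q.1 * v.1 := by
  unfold Dv
  rw [show (fun x : ℂ × ℂ => h x.1) = h ∘ Prod.fst from rfl,
    fderiv_comp q (hh q.1) differentiableAt_fst, fderiv_fst]
  show fderiv ℂ h q.1 v.1 = _
  rw [show v.1 = v.1 • (1:ℂ) by simp, _root_.map_smul, fderiv_apply_one_eq_deriv]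
  simp [mul_comm]

lemma Dv_cexp {G : ℂ × ℂ → ℂ} (hG : Differentiable ℂ G) (v q : ℂ × ℂ) :
    Dv v (fun x => Complex.exp (G x)) q = Complex.exp (G q) * Dv v G q := by
  unfold Dv
  rw [((hG q).hasFDerivAt.cexp).fderiv]
  simp

/-- two-variable creation operator -/
noncomputable def cre2 (b : ℝ) (F : ℂ × ℂ → ℂ) (q : ℂ × ℂ) : ℂ :=
  -2 * I * (Dv (1,0) F q - ((b:ℂ) * q.2 / 4) * F q)

/-- two-variable annihilation operator -/
noncomputable def ann2 (b : ℝ) (F : ℂ × ℂ → ℂ) (q : ℂ × ℂ) : ℂ :=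
  -2 * I * (Dv (0,1) F q + ((b:ℂ) * q.1 / 4) * F q)

lemma smooth_coord1 (b : ℝ) : ContDiff ℂ ∞ (fun q : ℂ × ℂ => (b:ℂ) * q.1 / 4) := by
  have : (fun q : ℂ × ℂ => (b:ℂ) * q.1 / 4) = fun q : ℂ × ℂ => ((b:ℂ)/4) * q.1 := by
    funext q; ring
  rw [this]; exact contDiff_const.mul contDiff_fst

lemma smooth_coord2 (b : ℝ) : ContDiff ℂ ∞ (fun q : ℂ × ℂ => (b:ℂ) * q.2 / 4) := by
  have : (fun q : ℂ × ℂ => (b:ℂ) * q.2 / 4) = fun q : ℂ × ℂ => ((b:ℂ)/4) * q.2 := by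
    funext q; ring
  rw [this]; exact contDiff_const.mul contDiff_snd

lemma cre2_smooth {b : ℝ} {F : ℂ × ℂ → ℂ} (hF : ContDiff ℂ ∞ F) :
    ContDiff ℂ ∞ (cre2 b F) := by
  unfold cre2
  exact contDiff_const.mul ((Dv_smooth hF _).sub ((smooth_coord2 b).mul hF))

lemma ann2_smooth {b : ℝ} {F : ℂ × ℂ → ℂ} (hF : ContDiff ℂ ∞ F) :
    ContDiff ℂ ∞ (ann2 b F) := by
  unfold ann2
  exact contDiff_const.mul ((Dv_smooth hF _).add ((smooth_coord1 b).mul hF))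

lemma Dv_coord1 (b : ℝ) (v q : ℂ × ℂ) :
    Dv v (fun q : ℂ × ℂ => (b:ℂ) * q.1 / 4) q = (b:ℂ) * v.1 / 4 := by
  have : (fun q : ℂ × ℂ => (b:ℂ) * q.1 / 4) = fun q : ℂ × ℂ => ((b:ℂ)/4) * q.1 := by
    funext q; ring
  rw [this, Dv_const_mul (differentiable_fst) _ v q, Dv_fst]; ring

lemma Dv_coord2 (b : ℝ) (v q : ℂ × ℂ) :
    Dv v (fun q : ℂ × ℂ => (b:ℂ) * q.2 / 4) q = (b:ℂ) * v.2 / 4 := by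
  have : (fun q : ℂ × ℂ => (b:ℂ) * q.2 / 4) = fun q : ℂ × ℂ => ((b:ℂ)/4) * q.2 := by
    funext q; ring
  rw [this, Dv_const_mul (differentiable_snd) _ v q, Dv_snd]; ring

/-- expansion of `Dv v (cre2 b F)` -/
lemma Dv_cre2 {b : ℝ} {F : ℂ × ℂ → ℂ} (hF : ContDiff ℂ ∞ F) (v q : ℂ × ℂ) :
    Dv v (cre2 b F) q
      = -2 * I * (Dv v (Dv (1,0) F) q - ((b:ℂ) * v.2 / 4) * F q
          - ((b:ℂ) * q.2 / 4) * Dv v F q) := by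
  have hFd := hF.differentiable (by simp)
  have h2 : Differentiable ℂ (fun q : ℂ × ℂ => (b:ℂ) * q.2 / 4) :=
    (smooth_coord2 b).differentiable (by simp)
  unfold cre2
  rw [Dv_const_mul (G := fun q => Dv (1,0) F q - (b:ℂ) * q.2 / 4 * F q) (((Dv_diff hF _)).sub (h2.mul hFd)) _ v q,
    Dv_sub (H := fun q => (b:ℂ) * q.2 / 4 * F q) (Dv_diff hF _) (h2.mul hFd), Dv_mul h2 hFd, Dv_coord2]
  ring

/-- expansion of `Dv v (ann2 b F)` -/
lemma Dv_ann2 {b : ℝ} {F : ℂ × ℂ → ℂ} (hF : ContDiff ℂ ∞ F) (v q : ℂ × ℂ) :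
    Dv v (ann2 b F) q
      = -2 * I * (Dv v (Dv (0,1) F) q + ((b:ℂ) * v.1 / 4) * F q
          + ((b:ℂ) * q.1 / 4) * Dv v F q) := by
  have hFd := hF.differentiable (by simp)
  have h1 : Differentiable ℂ (fun q : ℂ × ℂ => (b:ℂ) * q.1 / 4) :=
    (smooth_coord1 b).differentiable (by simp)
  unfold ann2
  rw [Dv_const_mul (G := fun q => Dv (0,1) F q + (b:ℂ) * q.1 / 4 * F q) (((Dv_diff hF _)).add (h1.mul hFd)) _ v q,
    Dv_add (H := fun q => (b:ℂ) * q.1 / 4 * F q) (Dv_diff hF _) (h1.mul hFd), Dv_mul h1 hFd, Dv_coord1]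
  ring

/-- the commutation relation `[Q, Q̄] = 2b` -/
lemma comm2 {b : ℝ} {F : ℂ × ℂ → ℂ} (hF : ContDiff ℂ ∞ F) (q : ℂ × ℂ) :
    ann2 b (cre2 b F) q = cre2 b (ann2 b F) q + 2 * (b:ℂ) * F q := by
  have e1 : ann2 b (cre2 b F) q
      = -2 * I * (Dv (0,1) (cre2 b F) q + ((b:ℂ) * q.1 / 4) * cre2 b F q) := rfl
  have e2 : cre2 b (ann2 b F) q
      = -2 * I * (Dv (1,0) (ann2 b F) q - ((b:ℂ) * q.2 / 4) * ann2 b F q) := rfl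
  rw [e1, e2, Dv_cre2 hF, Dv_ann2 hF, Dv_swap hF (0,1) (1,0) q]
  unfold cre2 ann2
  have hI := Complex.I_sq
  ring_nf
  rw [Complex.I_sq]
  ring

/-- two-variable Landau operator -/
noncomputable def lan2 (b : ℝ) (F : ℂ × ℂ → ℂ) (q : ℂ × ℂ) : ℂ :=
  -2 * (Dv (1,0) (Dv (0,1) F) q + Dv (0,1) (Dv (1,0) F) q)
    + (b:ℂ) * q.2 * Dv (0,1) F q - (b:ℂ) * q.1 * Dv (1,0) F q
    + ((b:ℂ)^2/4) * (q.1 * q.2) * F q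

/-- `L = Q̄ Q + b` on the two-variable side -/
lemma lan2_eq {b : ℝ} {F : ℂ × ℂ → ℂ} (hF : ContDiff ℂ ∞ F) (q : ℂ × ℂ) :
    lan2 b F q = cre2 b (ann2 b F) q + (b:ℂ) * F q := by
  have e : cre2 b (ann2 b F) q
      = -2 * I * (Dv (1,0) (ann2 b F) q - ((b:ℂ) * q.2 / 4) * ann2 b F q) := rfl
  rw [e, Dv_ann2 hF (1,0) q]
  unfold lan2 ann2
  rw [Dv_swap hF (0,1) (1,0) q]
  ring_nf
  rw [Complex.I_sq]
  ring

lemma cre2_const_mul {b : ℝ} {G : ℂ × ℂ → ℂ} (hG : Differentiable ℂ G) (c : ℂ)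
    (q : ℂ × ℂ) : cre2 b (fun x => c * G x) q = c * cre2 b G q := by
  unfold cre2
  rw [Dv_const_mul hG]
  ring

/-- the sequence of two-variable eigenfunctions -/
noncomputable def Fseq (b : ℝ) (p : ℂ → ℂ) : ℕ → (ℂ × ℂ → ℂ)
  | 0 => fun q => p q.1 * Complex.exp ((-(b:ℂ)/4) * (q.1 * q.2))
  | n+1 => cre2 b (Fseq b p n)

lemma Fseq_smooth {b : ℝ} {p : ℂ → ℂ} (hp : Differentiable ℂ p) :
    ∀ n, ContDiff ℂ ∞ (Fseq b p n)
  | 0 => by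
    unfold Fseq
    exact (hp.contDiff.comp contDiff_fst).mul
      ((contDiff_const.mul (contDiff_fst.mul contDiff_snd)).cexp)
  | n+1 => cre2_smooth (Fseq_smooth hp n)

lemma ann2_Fseq_zero {b : ℝ} {p : ℂ → ℂ} (hp : Differentiable ℂ p) (q : ℂ × ℂ) :
    ann2 b (Fseq b p 0) q = 0 := by
  have hG : Differentiable ℂ (fun q : ℂ × ℂ => (-(b:ℂ)/4) * (q.1 * q.2)) :=
    (differentiable_const _).mul (differentiable_fst.mul differentiable_snd)
  have hP : Differentiable ℂ (fun q : ℂ × ℂ => p q.1) := hp.comp differentiable_fst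
  have hE : Differentiable ℂ (fun q : ℂ × ℂ => Complex.exp ((-(b:ℂ)/4) * (q.1 * q.2))) :=
    hG.cexp
  unfold ann2 Fseq
  rw [Dv_mul hP hE, Dv_cexp hG, Dv_const_mul (G := fun q : ℂ × ℂ => q.1 * q.2) (differentiable_fst.mul differentiable_snd),
    Dv_mul differentiable_fst differentiable_snd, Dv_fst, Dv_snd, Dv_comp_fst hp]
  simp
  ring

lemma ann2_Fseq_succ {b : ℝ} {p : ℂ → ℂ} (hp : Differentiable ℂ p) :
    ∀ n, ∀ q, ann2 b (Fseq b p (n+1)) q = (2*(n:ℂ)+2) * (b:ℂ) * Fseq b p n q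
  | 0, q => by
    rw [show Fseq b p 1 = cre2 b (Fseq b p 0) from rfl,
      comm2 (Fseq_smooth hp 0) q]
    have h0 : ∀ x, ann2 b (Fseq b p 0) x = 0 := ann2_Fseq_zero hp
    have : cre2 b (ann2 b (Fseq b p 0)) q = 0 := by
      unfold cre2
      have : (ann2 b (Fseq b p 0)) = fun _ => (0:ℂ) := funext h0
      rw [this]
      unfold Dv
      simp
    rw [this]
    ring
  | n+1, q => by
    rw [show Fseq b p (n+2) = cre2 b (Fseq b p (n+1)) from rfl,
      comm2 (Fseq_smooth hp (n+1)) q]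
    have he : ann2 b (Fseq b p (n+1+1-1)) = fun x => (2*(n:ℂ)+2) * (b:ℂ) * Fseq b p n x :=
      funext (ann2_Fseq_succ hp n)
    have : cre2 b (ann2 b (Fseq b p (n+1))) q
        = (2*(n:ℂ)+2) * (b:ℂ) * cre2 b (Fseq b p n) q := by
      have := cre2_const_mul (b := b) ((Fseq_smooth (b := b) hp n).differentiable (by simp))
        ((2*(n:ℂ)+2) * (b:ℂ)) q
      rw [show ann2 b (Fseq b p (n+1)) = fun x => (2*(n:ℂ)+2) * (b:ℂ) * Fseq b p n x
        from funext (ann2_Fseq_succ hp n), this]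
    rw [this, show cre2 b (Fseq b p n) = Fseq b p (n+1) from rfl]
    push_cast
    ring

/-- eigen-equation on the two-variable side -/
lemma lan2_Fseq {b : ℝ} {p : ℂ → ℂ} (hp : Differentiable ℂ p) (n : ℕ) (q : ℂ × ℂ) :
    lan2 b (Fseq b p n) q = (2*(n:ℂ)+1) * (b:ℂ) * Fseq b p n q := by
  rw [lan2_eq (Fseq_smooth hp n) q]
  cases n with
  | zero =>
    have h0 : (ann2 b (Fseq b p 0)) = fun _ => (0:ℂ) := funext (ann2_Fseq_zero hp)
    have : cre2 b (ann2 b (Fseq b p 0)) q = 0 := by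
      rw [h0]; unfold cre2 Dv; simp
    rw [this]; push_cast; ring
  | succ n =>
    have he : ann2 b (Fseq b p (n+1)) = fun x => (2*(n:ℂ)+2) * (b:ℂ) * Fseq b p n x :=
      funext (ann2_Fseq_succ hp n)
    rw [he, cre2_const_mul ((Fseq_smooth hp n).differentiable (by simp)) _ q,
      show cre2 b (Fseq b p n) = Fseq b p (n+1) from rfl]
    push_cast
    ring

section Bridge
open ContDiff

/-- the real-linear embedding `z ↦ (z, z̄)` -/
noncomputable def jm : ℂ →L[ℝ] ℂ × ℂ :=
  (ContinuousLinearMap.id ℝ ℂ).prod Complex.conjCLE.toContinuousLinearMap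

lemma jm_apply (v : ℂ) : jm v = (v, (starRingEnd ℂ) v) := by
  simp [jm, Complex.conjCLE]

lemma pd_restr {F : ℂ × ℂ → ℂ} (hF : Differentiable ℂ F) (v z : ℂ) :
    pd (fun w => F (w, (starRingEnd ℂ) w)) v z
      = Dv (v, (starRingEnd ℂ) v) F (z, (starRingEnd ℂ) z) := by
  unfold pd Dv
  have hco : (fun w => F (w, (starRingEnd ℂ) w)) = F ∘ jm := by
    funext w; rw [Function.comp_apply, jm_apply]
  rw [hco, fderiv_comp z ((hF (jm z)).restrictScalars ℝ) jm.differentiableAt,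
    jm.fderiv, ((hF (jm z)).hasFDerivAt.restrictScalars ℝ).fderiv]
  simp [jm_apply]

lemma Dv_bilin {F : ℂ × ℂ → ℂ} (hF : Differentiable ℂ F) (a c : ℂ × ℂ) (q : ℂ × ℂ) :
    Dv (a + c) F q = Dv a F q + Dv c F q := by unfold Dv; simp

lemma Dv_smul {F : ℂ × ℂ → ℂ} (c : ℂ) (a : ℂ × ℂ) (q : ℂ × ℂ) :
    Dv (c • a) F q = c * Dv a F q := by
  unfold Dv; rw [_root_.map_smul]; simp

lemma pair_decomp (a b : ℂ) : (a, b) = a • ((1:ℂ),(0:ℂ)) + b • ((0:ℂ),(1:ℂ)) := by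
  simp [Prod.ext_iff]

lemma Dv_expand {F : ℂ × ℂ → ℂ} (hF : Differentiable ℂ F) (a b : ℂ) (q : ℂ × ℂ) :
    Dv (a, b) F q = a * Dv (1,0) F q + b * Dv (0,1) F q := by
  rw [pair_decomp a b, Dv_bilin hF, Dv_smul, Dv_smul]

lemma wdz_restr {F : ℂ × ℂ → ℂ} (hF : Differentiable ℂ F) (z : ℂ) :
    wdz (fun w => F (w, (starRingEnd ℂ) w)) z = Dv (1,0) F (z, (starRingEnd ℂ) z) := by
  unfold wdz
  rw [pd_restr hF 1 z, pd_restr hF Complex.I z]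
  simp only [map_one, Complex.conj_I]
  rw [Dv_expand hF 1 1, Dv_expand hF Complex.I (-Complex.I)]
  ring_nf
  rw [Complex.I_sq]
  ring

lemma wdzbar_restr {F : ℂ × ℂ → ℂ} (hF : Differentiable ℂ F) (z : ℂ) :
    wdzbar (fun w => F (w, (starRingEnd ℂ) w)) z = Dv (0,1) F (z, (starRingEnd ℂ) z) := by
  unfold wdzbar
  rw [pd_restr hF 1 z, pd_restr hF Complex.I z]
  simp only [map_one, Complex.conj_I]
  rw [Dv_expand hF 1 1, Dv_expand hF Complex.I (-Complex.I)]
  ring_nf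
  rw [Complex.I_sq]
  ring

lemma creQ_restr {b : ℝ} {F : ℂ × ℂ → ℂ} (hF : Differentiable ℂ F) (z : ℂ) :
    creQ b (fun w => F (w, (starRingEnd ℂ) w)) z = cre2 b F (z, (starRingEnd ℂ) z) := by
  unfold creQ cre2
  rw [wdz_restr hF z]

lemma landau_restr {b : ℝ} {F : ℂ × ℂ → ℂ} (hF : ContDiff ℂ ∞ F) (z : ℂ) :
    landau b (fun w => F (w, (starRingEnd ℂ) w)) z = lan2 b F (z, (starRingEnd ℂ) z) := by
  have hFd : Differentiable ℂ F := hF.differentiable (by simp)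
  have h1 : pd (fun w => F (w, (starRingEnd ℂ) w)) 1
      = fun z => Dv ((1:ℂ), (1:ℂ)) F (z, (starRingEnd ℂ) z) := by
    funext w; rw [pd_restr hFd 1 w]; simp
  have hI : pd (fun w => F (w, (starRingEnd ℂ) w)) Complex.I
      = fun z => Dv (Complex.I, -Complex.I) F (z, (starRingEnd ℂ) z) := by
    funext w; rw [pd_restr hFd Complex.I w]; simp
  have h11 : pd (pd (fun w => F (w, (starRingEnd ℂ) w)) 1) 1 z
      = Dv ((1:ℂ),(1:ℂ)) (Dv ((1:ℂ),(1:ℂ)) F) (z, (starRingEnd ℂ) z) := by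
    rw [h1, pd_restr (Dv_diff hF _) 1 z]; simp
  have hII : pd (pd (fun w => F (w, (starRingEnd ℂ) w)) Complex.I) Complex.I z
      = Dv (Complex.I, -Complex.I) (Dv (Complex.I, -Complex.I) F)
          (z, (starRingEnd ℂ) z) := by
    rw [hI, pd_restr (Dv_diff hF _) Complex.I z]; simp
  have hre : ((z.re:ℝ):ℂ) = (z + (starRingEnd ℂ) z)/2 := by
    rw [Complex.add_conj]; push_cast; ring
  have him : ((z.im:ℝ):ℂ) = (z - (starRingEnd ℂ) z)/(2*Complex.I) := by
    rw [Complex.sub_conj]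
    field_simp
    push_cast; ring
  unfold landau lan2
  rw [h11, hII, h1, hI]
  simp only []
  rw [Dv_expand (Dv_diff hF _) 1 1, Dv_expand (Dv_diff hF _) Complex.I (-Complex.I)]
  have e1 : Dv ((1:ℂ),(1:ℂ)) F = fun q => Dv (1,0) F q + Dv (0,1) F q := by
    funext q; rw [Dv_expand hFd]; ring
  have e2 : Dv (Complex.I, -Complex.I) F
      = fun q => Complex.I * Dv (1,0) F q + (-Complex.I) * Dv (0,1) F q := by
    funext q; rw [Dv_expand hFd]
  rw [e1, e2]
  rw [Dv_add (Dv_diff hF _) (Dv_diff hF _), Dv_add (Dv_diff hF _) (Dv_diff hF _)]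
  rw [Dv_add ((Dv_diff hF _).const_mul _) ((Dv_diff hF _).const_mul _),
      Dv_add ((Dv_diff hF _).const_mul _) ((Dv_diff hF _).const_mul _)]
  rw [Dv_const_mul (Dv_diff hF _), Dv_const_mul (Dv_diff hF _),
      Dv_const_mul (Dv_diff hF _), Dv_const_mul (Dv_diff hF _)]
  rw [Dv_swap hF (0,1) (1,0)]
  rw [hre, him]
  ring_nf
  simp only [Complex.inv_I, Complex.I_sq]
  ring_nf
  simp only [Complex.I_sq]
  ring

end Bridge

/-- For every entire function `p` and every `n ∈ ℕ`, the function
`g = Q̄ⁿ(p(z) exp(−b|z|²/4))` satisfies `L g = (2n+1) b g`; thus every Landau level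
`Λ_{n+1} = (2n+1)b` admits smooth eigenfunctions of the Landau Hamiltonian. -/
theorem landau_level_eigenfunctions (b : ℝ) (hb : 0 < b)
    (p : ℂ → ℂ) (hp : Differentiable ℂ p) (n : ℕ) (g : ℂ → ℂ)
    (hg : g = (creQ b)^[n]
        (fun z : ℂ => p z * Complex.exp (-((b * ‖z‖ ^ 2 / 4 : ℝ) : ℂ)))) :
    ∀ x : ℂ, landau b g x = ((2 * n + 1 : ℝ) : ℂ) * (b : ℂ) * g x := by
  have key : ∀ m : ℕ, (creQ b)^[m]
        (fun z : ℂ => p z * Complex.exp (-((b * ‖z‖ ^ 2 / 4 : ℝ) : ℂ)))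
      = fun z : ℂ => Fseq b p m (z, (starRingEnd ℂ) z) := by
    intro m
    induction m with
    | zero =>
      funext z
      show p z * Complex.exp (-((b * ‖z‖ ^ 2 / 4 : ℝ) : ℂ))
          = p z * Complex.exp ((-(b:ℂ)/4) * (z * (starRingEnd ℂ) z))
      congr 1
      congr 1
      rw [Complex.mul_conj, ← Complex.sq_norm]
      push_cast
      ring
    | succ m ih =>
      rw [Function.iterate_succ_apply', ih]
      funext z
      exact creQ_restr ((Fseq_smooth hp m).differentiable (by simp)) z
  intro x
  rw [hg, key n, landau_restr (Fseq_smooth hp n) x, lan2_Fseq hp n]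
  push_cast
  ring
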